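/- Let μ < λ be infinite cardinals with λ > μ. There exist 2^λ pairwise μ-non-equivalent subtrees of ^{<ω}λ, each of cardinality λ and each μ-wide, provided there exists a single μ-strongly rigid subtree of ^{<ω}λ of cardinality λ in which the root has λ many immediate successors. -/

import Mathlib

universe u

/-- `S` is a subtree of `^{<ω}α`: a set of finite sequences closed under initial segments. -/
def IsSubtree {α : Type u} (S : Set (List α)) : Prop :=
  ∀ η ∈ S, ∀ ν : List α, ν <+: η → ν ∈ S

/-- The cone of proper extensions of `τ` inside `T`. -/
def Cone {α : Type u} (T : Set (List α)) (τ : List α) : Set (List α) :=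
  {η ∈ T | τ <+: η ∧ τ ≠ η}

/-- The tree `T` with the cones over `⋃_{ρ∈T} A^ρ` removed. -/
def Reduced {α : Type u} (T : Set (List α)) (Afam : List α → Set (List α)) :
    Set (List α) :=
  T \ ⋃ τ ∈ ⋃ ρ ∈ T, Afam ρ, Cone T τ

/-- `T₀` and `T₁` are `μ`-equivalent: after removing from each a union of cones indexed by
sets `A^ρ_i ⊆ (T_i)_ρ` of cardinality `< μ`, the remaining sets are isomorphic as partial
orders (under the initial-segment order). -/
def MuEquiv {α : Type u} (mu : Cardinal.{u}) (T0 T1 : Set (List α)) : Prop :=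
  ∃ A0 A1 : List α → Set (List α),
    (∀ ρ ∈ T0, A0 ρ ⊆ Cone T0 ρ ∧ Cardinal.mk (A0 ρ) < mu) ∧
    (∀ ρ ∈ T1, A1 ρ ⊆ Cone T1 ρ ∧ Cardinal.mk (A1 ρ) < mu) ∧
    ∃ e : Reduced T0 A0 ≃ Reduced T1 A1,
      ∀ x y : Reduced T0 A0, (x : List α) <+: (y : List α) ↔
        ((e x : List α)) <+: ((e y : List α))

/-- `T` is `μ`-wide: every node of `T` has at least `μ` immediate successors in `T`. -/
def MuWide {α : Type u} (mu : Cardinal.{u}) (T : Set (List α)) : Prop :=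
  ∀ η ∈ T, mu ≤ Cardinal.mk {ν ∈ T | η <+: ν ∧ ν.length = η.length + 1}

/-- The cone `T⁺_ν = {η ∈ T : ν ⊴ η}` of (not necessarily proper) extensions of `ν`. -/
def ConePlus {α : Type u} (T : Set (List α)) (ν : List α) : Set (List α) :=
  {η ∈ T | ν <+: η}

/-- `T` is `μ`-strongly rigid: `T` is `μ`-wide and for every `η` and `α₀ < α₁` with
`η⌢⟨α₀⟩, η⌢⟨α₁⟩ ∈ T`, the cones `T⁺_{η⌢⟨α₀⟩}` and `T⁺_{η⌢⟨α₁⟩}` are not `μ`-equivalent. -/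
def StronglyRigid {α : Type u} [LinearOrder α] (mu : Cardinal.{u}) (T : Set (List α)) :
    Prop :=
  MuWide mu T ∧ ∀ η : List α, ∀ a0 a1 : α, a0 < a1 →
    η ++ [a0] ∈ T → η ++ [a1] ∈ T →
    ¬ MuEquiv mu (ConePlus T (η ++ [a0])) (ConePlus T (η ++ [a1]))

namespace Stmt7Aux

open Cardinal

variable {X : Type u}

lemma prefix_singleton {a : X} {τ : List X} (h : τ <+: [a]) : τ = [] ∨ τ = [a] := by
  rcases h with ⟨r, hr⟩
  cases τ with
  | nil => exact Or.inl rfl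
  | cons c t =>
    right
    simp only [List.cons_append, List.cons.injEq, List.append_eq_nil_iff] at hr
    obtain ⟨rfl, rfl, rfl⟩ := hr
    rfl

lemma singleton_prefix_singleton {a b : X} (h : [a] <+: [b]) : a = b := by
  have := h.eq_of_length (by simp); simpa using this

lemma singleton_prefix_head {a c : X} {η : List X} (h1 : [a] <+: η) (h2 : [c] <+: η) :
    c = a :=
  singleton_prefix_singleton (List.prefix_of_prefix_length_le h2 h1 (by simp))

lemma length_lt_of_proper {τ η : List X} (h : τ <+: η) (hne : τ ≠ η) :
    τ.length < η.length :=
  lt_of_le_of_ne h.length_le (fun hl => hne (h.eq_of_length hl))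

/-- removal predicate for `Reduced`. -/
def Rem (T : Set (List X)) (A : List X → Set (List X)) (η : List X) : Prop :=
  ∃ ρ ∈ T, ∃ τ ∈ A ρ, τ <+: η ∧ τ ≠ η

lemma mem_reduced_iff {T : Set (List X)} {A : List X → Set (List X)} {η : List X} :
    η ∈ Reduced T A ↔ η ∈ T ∧ ¬ Rem T A η := by
  simp only [Reduced, Set.mem_diff, Set.mem_iUnion, Cone, Set.mem_setOf_eq, Rem]
  constructor
  · rintro ⟨h1, h2⟩
    refine ⟨h1, ?_⟩
    rintro ⟨ρ, hρ, τ, hτ, hpre, hne⟩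
    exact h2 ⟨τ, ⟨ρ, hρ, hτ⟩, h1, hpre, hne⟩
  · rintro ⟨h1, h2⟩
    refine ⟨h1, ?_⟩
    rintro ⟨τ, ⟨ρ, hρ, hτ⟩, _, hpre, hne⟩
    exact h2 ⟨ρ, hρ, τ, hτ, hpre, hne⟩

lemma nil_mem_reduced {T : Set (List X)} {A : List X → Set (List X)} (h : [] ∈ T) :
    [] ∈ Reduced T A := by
  refine mem_reduced_iff.mpr ⟨h, ?_⟩
  rintro ⟨ρ, hρ, τ, hτ, hpre, hne⟩
  exact hne (List.prefix_nil.mp hpre)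

lemma prefix_mem_reduced {T : Set (List X)} {A : List X → Set (List X)}
    (hT : IsSubtree T) {η ν : List X} (hη : η ∈ Reduced T A) (hp : ν <+: η) :
    ν ∈ Reduced T A := by
  obtain ⟨h1, h2⟩ := mem_reduced_iff.mp hη
  refine mem_reduced_iff.mpr ⟨hT _ h1 _ hp, ?_⟩
  rintro ⟨ρ, hρ, τ, hτ, hpre, hne⟩
  refine h2 ⟨ρ, hρ, τ, hτ, hpre.trans hp, ?_⟩
  intro heq
  have h3 : ν = η := hp.eq_of_length
    (le_antisymm hp.length_le (heq ▸ hpre).length_le)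
  exact hne (heq.trans h3.symm)

lemma singleton_mem_reduced {T : Set (List X)} {A : List X → Set (List X)}
    (hA : ∀ ρ ∈ T, A ρ ⊆ Cone T ρ) {a : X} (h1 : [a] ∈ T) : [a] ∈ Reduced T A := by
  refine mem_reduced_iff.mpr ⟨h1, ?_⟩
  rintro ⟨ρ, hρ, τ, hτ, hpre, hne⟩
  obtain ⟨hτT, hρτ, hρne⟩ := hA ρ hρ hτ
  rcases prefix_singleton hpre with rfl | rfl
  · exact hρne (List.prefix_nil.mp hρτ)
  · exact hne rfl

/-- Trees of the form: all elements of `T` whose first entry lies in `S`. -/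
def TS (T : Set (List X)) (S : Set X) : Set (List X) :=
  {η ∈ T | ∀ a : X, [a] <+: η → a ∈ S}

lemma TS_subset {T : Set (List X)} {S : Set X} : TS T S ⊆ T := fun _ h => h.1

lemma nil_mem_TS {T : Set (List X)} {S : Set X} (h : [] ∈ T) : [] ∈ TS T S :=
  ⟨h, fun a ha => absurd (List.prefix_nil.mp ha) (by simp)⟩

lemma mem_TS_single {T : Set (List X)} {S : Set X} {c : X} (h : [c] ∈ T) (hc : c ∈ S) :
    [c] ∈ TS T S :=
  ⟨h, fun d hd => by rw [singleton_prefix_singleton hd]; exact hc⟩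

lemma isSubtree_TS {T : Set (List X)} {S : Set X} (hT : IsSubtree T) :
    IsSubtree (TS T S) := by
  rintro η ⟨hηT, hηS⟩ ν hp
  exact ⟨hT _ hηT _ hp, fun a ha => hηS a (ha.trans hp)⟩

lemma conePlus_subset_TS {T : Set (List X)} {S : Set X} {a : X} (ha : a ∈ S)
    {η : List X} (hη : η ∈ ConePlus T [a]) : η ∈ TS T S :=
  ⟨hη.1, fun c hc => by rw [singleton_prefix_head hη.2 hc]; exact ha⟩

lemma muEquiv_symm {mu : Cardinal.{u}} {T0 T1 : Set (List X)}
    (h : MuEquiv mu T0 T1) : MuEquiv mu T1 T0 := by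
  obtain ⟨A0, A1, h0, h1, e, he⟩ := h
  refine ⟨A1, A0, h1, h0, e.symm, fun x y => ?_⟩
  have := (he (e.symm x) (e.symm y)).symm
  rwa [Equiv.apply_symm_apply, Equiv.apply_symm_apply] at this

lemma muWide_TS {mu : Cardinal.{u}} {T : Set (List X)} (hwide : MuWide mu T)
    {S : Set X} (hS : ∀ a ∈ S, [a] ∈ T) (hcard : mu ≤ Cardinal.mk S) :
    MuWide mu (TS T S) := by
  intro η hη
  cases η with
  | nil =>
    have hinj : Function.Injective (fun a : S =>
        (⟨[a.1], mem_TS_single (hS a.1 a.2) a.2, List.nil_prefix, by simp⟩ :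
          ↥{ν ∈ TS T S | [] <+: ν ∧ ν.length = List.length ([] : List X) + 1})) := by
      intro a b hab
      have h2 : [a.1] = [b.1] := congrArg Subtype.val hab
      exact Subtype.ext (by simpa using h2)
    exact hcard.trans (Cardinal.mk_le_of_injective hinj)
  | cons c t =>
    have hset : {ν ∈ TS T S | c :: t <+: ν ∧ ν.length = (c :: t).length + 1} =
        {ν ∈ T | c :: t <+: ν ∧ ν.length = (c :: t).length + 1} := by
      ext ν
      constructor
      · rintro ⟨hν, h2⟩; exact ⟨hν.1, h2⟩
      · rintro ⟨hν, hpre, hlen⟩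
        refine ⟨⟨hν, fun d hd => ?_⟩, hpre, hlen⟩
        have hc : [c] <+: ν := List.IsPrefix.trans ⟨t, rfl⟩ hpre
        rw [singleton_prefix_head hc hd]
        exact hη.2 c ⟨t, rfl⟩
    rw [hset]
    exact hwide _ hη.1


/-- Restriction of a cone-removal family to the cone above a surviving root successor. -/
lemma restrict_valid_and_eq {mu : Cardinal.{u}} (hmu : Cardinal.aleph0 ≤ mu)
    {T : Set (List X)} (hTne : [] ∈ T) {S : Set X}
    {A : List X → Set (List X)}
    (hA : ∀ ρ ∈ TS T S, A ρ ⊆ Cone (TS T S) ρ ∧ Cardinal.mk (A ρ) < mu)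
    {a : X} (ha : a ∈ S) (haT : [a] ∈ T) (hnA : [a] ∉ A []) :
    (∀ ρ ∈ ConePlus T [a],
        (A ρ ∪ {τ ∈ A [] | ρ = [a] ∧ [a] <+: τ}) ⊆ Cone (ConePlus T [a]) ρ ∧
        Cardinal.mk ↥(A ρ ∪ {τ ∈ A [] | ρ = [a] ∧ [a] <+: τ}) < mu) ∧
    Reduced (ConePlus T [a]) (fun ρ => A ρ ∪ {τ ∈ A [] | ρ = [a] ∧ [a] <+: τ}) =
      {η | η ∈ Reduced (TS T S) A ∧ [a] <+: η} := by
  have hnilTS : [] ∈ TS T S := nil_mem_TS hTne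
  have hCsub : ∀ {η : List X}, η ∈ ConePlus T [a] → η ∈ TS T S :=
    fun hη => conePlus_subset_TS ha hη
  constructor
  · intro ρ hρ
    constructor
    · rintro τ (hτ | ⟨hτ0, rfl, hpre⟩)
      · obtain ⟨hτTS, hρτ, hρne⟩ := (hA ρ (hCsub hρ)).1 hτ
        exact ⟨⟨hτTS.1, hρ.2.trans hρτ⟩, hρτ, hρne⟩
      · obtain ⟨hτTS, -, -⟩ := (hA [] hnilTS).1 hτ0
        refine ⟨⟨hτTS.1, hpre⟩, hpre, ?_⟩
        rintro rfl
        exact hnA hτ0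
    · refine lt_of_le_of_lt (Cardinal.mk_union_le _ _) ?_
      refine Cardinal.add_lt_of_lt hmu ((hA ρ (hCsub hρ)).2) ?_
      exact lt_of_le_of_lt (Cardinal.mk_le_mk_of_subset (Set.sep_subset _ _))
        ((hA [] hnilTS).2)
  · ext η
    simp only [Set.mem_setOf_eq]
    rw [mem_reduced_iff, mem_reduced_iff]
    constructor
    · rintro ⟨⟨hηT, hpre⟩, hrem⟩
      refine ⟨⟨⟨hηT, fun c hc => by rw [singleton_prefix_head hpre hc]; exact ha⟩, ?_⟩, hpre⟩
      rintro ⟨ρ, hρTS, τ, hτ, hpreτ, hneτ⟩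
      obtain ⟨hτTS, hρτ, hρne⟩ := (hA ρ hρTS).1 hτ
      have hτne : τ ≠ [] := by
        rintro rfl
        exact hρne (List.prefix_nil.mp hρτ)
      have haτ : [a] <+: τ := by
        refine List.prefix_of_prefix_length_le hpre hpreτ ?_
        simpa using Nat.succ_le_of_lt (List.length_pos_iff.mpr hτne)
      apply hrem
      rcases eq_or_ne ρ [] with rfl | hρnil
      · exact ⟨[a], ⟨haT, List.prefix_refl _⟩, τ, Or.inr ⟨hτ, rfl, haτ⟩, hpreτ, hneτ⟩
      · have haρ : [a] <+: ρ := by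
          refine List.prefix_of_prefix_length_le hpre (hρτ.trans hpreτ) ?_
          simpa using Nat.succ_le_of_lt (List.length_pos_iff.mpr hρnil)
        exact ⟨ρ, ⟨hρTS.1, haρ⟩, τ, Or.inl hτ, hpreτ, hneτ⟩
    · rintro ⟨⟨hηTS, hrem⟩, hpre⟩
      refine ⟨⟨hηTS.1, hpre⟩, ?_⟩
      rintro ⟨ρ, hρC, τ, (hτ | ⟨hτ0, -, -⟩), hpreτ, hneτ⟩
      · exact hrem ⟨ρ, hCsub hρC, τ, hτ, hpreτ, hneτ⟩
      · exact hrem ⟨[], hnilTS, τ, hτ0, hpreτ, hneτ⟩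

/-- Transfer an order isomorphism to matched restrictions. -/
lemma equiv_of_eq_restrict {P0 P1 Q0 Q1 : Set (List X)} {p0 p1 : List X}
    (h0 : Q0 = {η | η ∈ P0 ∧ p0 <+: η}) (h1 : Q1 = {η | η ∈ P1 ∧ p1 <+: η})
    (e : P0 ≃ P1)
    (he : ∀ x y : P0, (x : List X) <+: (y : List X) ↔ ((e x : List X)) <+: ((e y : List X)))
    (x0 : P0) (hx0 : (x0 : List X) = p0) (hex0 : ((e x0 : List X)) = p1) :
    ∃ f : Q0 ≃ Q1, ∀ x y : Q0, (x : List X) <+: (y : List X) ↔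
      ((f x : List X)) <+: ((f y : List X)) := by
  subst h0 h1 hx0 hex0
  refine ⟨⟨fun x => ⟨(e ⟨x.1, x.2.1⟩).1, (e ⟨x.1, x.2.1⟩).2, (he x0 ⟨x.1, x.2.1⟩).mp x.2.2⟩,
    fun z => ⟨(e.symm ⟨z.1, z.2.1⟩).1, (e.symm ⟨z.1, z.2.1⟩).2,
      (he x0 (e.symm ⟨z.1, z.2.1⟩)).mpr (by rw [Equiv.apply_symm_apply]; exact z.2.2)⟩,
    ?_, ?_⟩, fun x y => he ⟨x.1, x.2.1⟩ ⟨y.1, y.2.1⟩⟩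
  · intro x
    have hv : (e.symm (e ⟨x.1, x.2.1⟩)).val = x.1 :=
      congrArg Subtype.val (e.symm_apply_apply ⟨x.1, x.2.1⟩)
    exact Subtype.ext hv
  · intro z
    have hv : (e (e.symm ⟨z.1, z.2.1⟩)).val = z.1 :=
      congrArg Subtype.val (e.apply_symm_apply ⟨z.1, z.2.1⟩)
    exact Subtype.ext hv


lemma main' {mu : Cardinal.{u}} (hmu : Cardinal.aleph0 ≤ mu) {T : Set (List X)}
    (hT : IsSubtree T) (hwide : MuWide mu T) (hTne : [] ∈ T) {S S' : Set X}
    (hme : MuEquiv mu (TS T S) (TS T S')) :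
    ∃ bad : Set X, Cardinal.mk bad < mu ∧
      ∀ a, a ∈ S → a ∉ S' → a ∉ bad → [a] ∈ T →
        ∃ b, [b] ∈ T ∧ b ≠ a ∧ MuEquiv mu (ConePlus T [a]) (ConePlus T [b]) := by
  obtain ⟨A0, A1, hA0, hA1, e, he⟩ := hme
  have hnil0 : [] ∈ TS T S := nil_mem_TS hTne
  have hnil1 : [] ∈ TS T S' := nil_mem_TS hTne
  refine ⟨{c | [c] ∈ A0 []}, ?_, ?_⟩
  · have hinj : Function.Injective
        (fun c : {c : X | [c] ∈ A0 []} => (⟨[c.1], c.2⟩ : A0 [])) := by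
      intro c d hcd
      have h2 : [c.1] = [d.1] := congrArg Subtype.val hcd
      exact Subtype.ext (by simpa using h2)
    exact lt_of_le_of_lt (Cardinal.mk_le_of_injective hinj) (hA0 [] hnil0).2
  · intro a haS haS' hbad haT
    have haA0 : [a] ∉ A0 [] := hbad
    have hanil : ([a] : List X) ≠ [] := by simp
    have hmem_a : [a] ∈ Reduced (TS T S) A0 :=
      singleton_mem_reduced (fun ρ hρ => (hA0 ρ hρ).1) (mem_TS_single haT haS)
    have hmemnil0 : [] ∈ Reduced (TS T S) A0 := nil_mem_reduced hnil0
    have hmemnil1 : [] ∈ Reduced (TS T S') A1 := nil_mem_reduced hnil1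
    set xa : Reduced (TS T S) A0 := ⟨[a], hmem_a⟩ with hxa
    set xnil : Reduced (TS T S) A0 := ⟨[], hmemnil0⟩ with hxnil
    have henil : ((e xnil : List X)) = [] := by
      have h1 : ((e xnil : List X)) <+: ([] : List X) := by
        have h2 := (he xnil (e.symm ⟨[], hmemnil1⟩)).mp List.nil_prefix
        rwa [Equiv.apply_symm_apply] at h2
      exact List.prefix_nil.mp h1
    obtain ⟨b, hb⟩ : ∃ b, ((e xa : List X)) = [b] := by
      cases hval : ((e xa : List X)) with
      | nil =>
        exfalso
        have h1 : e xa = e xnil := Subtype.ext (by rw [hval, henil])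
        have h2 := e.injective h1
        exact hanil (congrArg Subtype.val h2)
      | cons b t =>
        cases t with
        | nil => exact ⟨b, rfl⟩
        | cons c t' =>
          exfalso
          have hzmem : [b] ∈ Reduced (TS T S') A1 := by
            refine prefix_mem_reduced (isSubtree_TS hT) (e xa).2 ?_
            rw [hval]; exact ⟨c :: t', rfl⟩
          have hw : ((e.symm ⟨[b], hzmem⟩ : List X)) <+: [a] := by
            refine (he (e.symm ⟨[b], hzmem⟩) xa).mpr ?_
            rw [Equiv.apply_symm_apply, hval]
            exact ⟨c :: t', rfl⟩
          rcases prefix_singleton hw with h0 | h0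
          · have h1 : e.symm ⟨[b], hzmem⟩ = xnil := Subtype.ext h0
            have h2 := congrArg (fun w => ((e w : List X))) h1
            simp only [Equiv.apply_symm_apply] at h2
            rw [henil] at h2
            simp at h2
          · have h1 : e.symm ⟨[b], hzmem⟩ = xa := Subtype.ext h0
            have h2 := congrArg (fun w => ((e w : List X))) h1
            simp only [Equiv.apply_symm_apply] at h2
            rw [hval] at h2
            simp at h2
    have hbTS : [b] ∈ TS T S' := by
      have h2 := (mem_reduced_iff.mp (e xa).2).1
      rwa [hb] at h2
    have hbS' : b ∈ S' := hbTS.2 b (List.prefix_refl _)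
    have hbT : [b] ∈ T := hbTS.1
    have hba : b ≠ a := fun h => haS' (h ▸ hbS')
    by_cases hbA1 : [b] ∈ A1 []
    · exfalso
      have hposmu : (0 : Cardinal) < mu := Cardinal.aleph0_pos.trans_le hmu
      obtain ⟨ν, hνT, hνpre, hνlen⟩ :
          ∃ ν, ν ∈ {ν ∈ T | [a] <+: ν ∧ ν.length = [a].length + 1} := by
        have h2 := hwide [a] haT
        have h3 : Cardinal.mk {ν ∈ T | [a] <+: ν ∧ ν.length = [a].length + 1} ≠ 0 :=
          (hposmu.trans_le h2).ne'
        obtain ⟨ν⟩ := Cardinal.mk_ne_zero_iff.mp h3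
        exact ⟨ν.1, ν.2⟩
      have hνlen2 : ν.length = 2 := by simpa using hνlen
      have hνmem : ν ∈ Reduced (TS T S) A0 := by
        refine mem_reduced_iff.mpr ⟨⟨hνT, fun c hc => by
          rw [singleton_prefix_head hνpre hc]; exact haS⟩, ?_⟩
        rintro ⟨ρ, hρ, τ, hτ, hpre, hne⟩
        obtain ⟨hτTS, hρτ, hρne⟩ := (hA0 ρ hρ).1 hτ
        have hτne : τ ≠ [] := by rintro rfl; exact hρne (List.prefix_nil.mp hρτ)
        have hτlt : τ.length < 2 := hνlen2 ▸ length_lt_of_proper hpre hne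
        have hτpos : 0 < τ.length := List.length_pos_iff.mpr hτne
        have hτ1 : τ.length = 1 := by omega
        have hτa : τ = [a] := by
          refine (List.prefix_of_prefix_length_le hpre hνpre (by simp [hτ1])).eq_of_length ?_
          simp [hτ1]
        subst hτa
        rcases prefix_singleton hρτ with rfl | rfl
        · exact haA0 hτ
        · exact hρne rfl
      have hbw : [b] <+: ((e ⟨ν, hνmem⟩ : List X)) := by
        have h2 := (he xa ⟨ν, hνmem⟩).mp hνpre
        rwa [hb] at h2
      have hwne : ((e ⟨ν, hνmem⟩ : List X)) ≠ [b] := by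
        intro h
        have h1 : e ⟨ν, hνmem⟩ = e xa := Subtype.ext (by rw [h, hb])
        have h2 := congrArg Subtype.val (e.injective h1)
        have h3 := congrArg List.length h2
        rw [hνlen2] at h3
        simp [hxa] at h3
      have hrem := (mem_reduced_iff.mp (e ⟨ν, hνmem⟩).2).2
      exact hrem ⟨[], hnil1, [b], hbA1, hbw, fun h => hwne h.symm⟩
    · obtain ⟨hval0, heq0⟩ := restrict_valid_and_eq hmu hTne hA0 haS haT haA0
      obtain ⟨hval1, heq1⟩ := restrict_valid_and_eq hmu hTne hA1 hbS' hbT hbA1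
      obtain ⟨f, hf⟩ := equiv_of_eq_restrict heq0 heq1 e he xa rfl hb
      exact ⟨b, hbT, hba, _, _, hval0, hval1, f, hf⟩

end Stmt7Aux

open Stmt7Aux

/-- If there is a single `μ`-strongly rigid subtree of `^{<ω}λ` of cardinality `λ` whose
root has `λ` many immediate successors, then there are `2^λ` pairwise `μ`-non-equivalent
subtrees of `^{<ω}λ`, each of cardinality `λ` and each `μ`-wide. -/
theorem stmt7 (mu lam : Cardinal.{u}) (hmu : Cardinal.aleph0 ≤ mu) (hml : mu < lam)
    (T : Set (List lam.ord.ToType)) (hT : IsSubtree T)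
    (hrig : StronglyRigid mu T) (hcard : Cardinal.mk T = lam)
    (hroot : Cardinal.mk {ν ∈ T | ν.length = 1} = lam) :
    ∃ F : Set (Set (List lam.ord.ToType)),
      Cardinal.mk F = 2 ^ lam ∧
      (∀ T' ∈ F, IsSubtree T' ∧ Cardinal.mk T' = lam ∧ MuWide mu T') ∧
      (∀ T0 ∈ F, ∀ T1 ∈ F, T0 ≠ T1 → ¬ MuEquiv mu T0 T1) := by
  classical
  have hmkX : Cardinal.mk lam.ord.ToType = lam := Cardinal.mk_ord_toType lam
  have hlam : Cardinal.aleph0 ≤ lam := hmu.trans hml.le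
  have hwide : MuWide mu T := hrig.1
  have hTne : [] ∈ T := by
    have h0 : Cardinal.mk T ≠ 0 := by
      rw [hcard]; exact (Cardinal.aleph0_pos.trans_le hlam).ne'
    obtain ⟨⟨η, hη⟩⟩ := Cardinal.mk_ne_zero_iff.mp h0
    exact hT η hη [] List.nil_prefix
  have hmkR : Cardinal.mk {c : lam.ord.ToType | [c] ∈ T} = lam := by
    refine Eq.trans ?_ hroot
    refine Cardinal.mk_congr (Equiv.ofBijective
      (fun c : {c : lam.ord.ToType | [c] ∈ T} =>
        (⟨[c.1], c.2, by simp⟩ : ↥{ν ∈ T | ν.length = 1})) ⟨?_, ?_⟩)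
    · intro c d hcd
      have h2 : [c.1] = [d.1] := congrArg Subtype.val hcd
      exact Subtype.ext (by simpa using h2)
    · rintro ⟨ν, hνT, hνlen⟩
      obtain ⟨c, rfl⟩ := List.length_eq_one_iff.mp hνlen
      exact ⟨⟨c, hνT⟩, rfl⟩
  obtain ⟨j⟩ : Nonempty ((lam.ord.ToType ⊕ lam.ord.ToType × lam.ord.ToType) ↪ {c : lam.ord.ToType | [c] ∈ T}) := by
    have hle : Cardinal.mk (lam.ord.ToType ⊕ lam.ord.ToType × lam.ord.ToType) ≤ Cardinal.mk {c : lam.ord.ToType | [c] ∈ T} := by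
      have h2 : Cardinal.mk (lam.ord.ToType ⊕ lam.ord.ToType × lam.ord.ToType) = lam := by
        simp only [Cardinal.mk_sum, Cardinal.mk_prod, Cardinal.lift_id, hmkX]
        rw [Cardinal.mul_eq_self hlam, Cardinal.add_eq_self hlam]
      rw [h2, hmkR]
    exact (Cardinal.le_def _ _).mp hle
  set jf : lam.ord.ToType ⊕ lam.ord.ToType × lam.ord.ToType → lam.ord.ToType := fun s => (j s).1 with hjfdef
  have hjf_inj : Function.Injective jf := fun s t hst => j.injective (Subtype.ext hst)
  have hjfT : ∀ s, [jf s] ∈ T := fun s => (j s).2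
  set SY : Set lam.ord.ToType → Set lam.ord.ToType :=
    fun Y => {c | ∃ s, (∀ p : lam.ord.ToType × lam.ord.ToType, s = Sum.inr p → p.1 ∈ Y) ∧ jf s = c} with hSYdef
  have hSYsub : ∀ Y : Set lam.ord.ToType, ∀ c ∈ SY Y, [c] ∈ T := by
    rintro Y c ⟨s, -, rfl⟩; exact hjfT s
  have hinl : ∀ (Y : Set lam.ord.ToType) (x : lam.ord.ToType), jf (Sum.inl x) ∈ SY Y :=
    fun Y x => ⟨Sum.inl x, by simp, rfl⟩
  have hinr : ∀ (Y : Set lam.ord.ToType) (i x : lam.ord.ToType), i ∈ Y → jf (Sum.inr (i, x)) ∈ SY Y :=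
    fun Y i x hi => ⟨Sum.inr (i, x), fun p hp => by cases Sum.inr.inj hp; exact hi, rfl⟩
  have hinr' : ∀ (Y : Set lam.ord.ToType) (i x : lam.ord.ToType), jf (Sum.inr (i, x)) ∈ SY Y → i ∈ Y := by
    rintro Y i x ⟨s, hs, heq⟩
    exact hs (i, x) (hjf_inj heq)
  have hSYcard : ∀ Y : Set lam.ord.ToType, lam ≤ Cardinal.mk (SY Y) := by
    intro Y
    refine le_trans hmkX.ge ?_
    refine Cardinal.mk_le_of_injective
      (f := fun x : lam.ord.ToType => (⟨jf (Sum.inl x), hinl Y x⟩ : SY Y)) ?_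
    intro x y hxy
    have h2 : jf (Sum.inl x) = jf (Sum.inl y) := by
      have h3 := Subtype.ext_iff.mp hxy
      exact h3
    exact Sum.inl.inj (hjf_inj h2)
  have hginj : Function.Injective (fun Y : Set lam.ord.ToType => TS T (SY Y)) := by
    have key : ∀ Y Y' : Set lam.ord.ToType, TS T (SY Y) = TS T (SY Y') → ∀ i, i ∈ Y → i ∈ Y' := by
      intro Y Y' h i hi
      have h1 : [jf (Sum.inr (i, i))] ∈ TS T (SY Y) :=
        mem_TS_single (hjfT _) (hinr Y i i hi)
      rw [h] at h1
      exact hinr' Y' i i (h1.2 _ (List.prefix_refl _))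
    intro Y Y' h
    ext i
    exact ⟨key Y Y' h i, key Y' Y h.symm i⟩
  refine ⟨Set.range (fun Y : Set lam.ord.ToType => TS T (SY Y)), ?_, ?_, ?_⟩
  · rw [Cardinal.mk_range_eq _ hginj, Cardinal.mk_set, hmkX]
  · rintro T' ⟨Y, rfl⟩
    refine ⟨isSubtree_TS hT, ?_, ?_⟩
    · refine le_antisymm ((Cardinal.mk_le_mk_of_subset TS_subset).trans hcard.le) ?_
      refine le_trans hmkX.ge ?_
      refine Cardinal.mk_le_of_injective (f := fun x : lam.ord.ToType =>
        (⟨[jf (Sum.inl x)], mem_TS_single (hjfT _) (hinl Y x)⟩ : TS T (SY Y))) ?_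
      intro x y hxy
      have h2 : [jf (Sum.inl x)] = [jf (Sum.inl y)] := congrArg Subtype.val hxy
      exact Sum.inl.inj (hjf_inj (by simpa using h2))
    · exact muWide_TS hwide (hSYsub Y) (hml.le.trans (hSYcard Y))
  · rintro T0 ⟨Y, rfl⟩ T1 ⟨Y', rfl⟩ hne hMuE
    have hYne : Y ≠ Y' := fun h => hne (by rw [h])
    have hex : ∃ i, (i ∈ Y ∧ i ∉ Y') ∨ (i ∈ Y' ∧ i ∉ Y) := by
      by_contra hc
      push_neg at hc
      exact hYne (Set.ext fun i => by have := hc i; tauto)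
    obtain ⟨bad0, hbad0, hmain0⟩ :=
      main' (S := SY Y) (S' := SY Y') hmu hT hwide hTne hMuE
    obtain ⟨bad1, hbad1, hmain1⟩ :=
      main' (S := SY Y') (S' := SY Y) hmu hT hwide hTne (muEquiv_symm hMuE)
    obtain ⟨i, hi⟩ := hex
    have hbadlt : Cardinal.mk ↥(bad0 ∪ bad1) < mu :=
      lt_of_le_of_lt (Cardinal.mk_union_le _ _) (Cardinal.add_lt_of_lt hmu hbad0 hbad1)
    obtain ⟨x, hx⟩ : ∃ x : lam.ord.ToType, jf (Sum.inr (i, x)) ∉ bad0 ∪ bad1 := by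
      by_contra hc
      push_neg at hc
      have hle : lam ≤ Cardinal.mk ↥(bad0 ∪ bad1) := by
        refine le_trans hmkX.ge ?_
        refine Cardinal.mk_le_of_injective (f := fun x : lam.ord.ToType =>
          (⟨jf (Sum.inr (i, x)), hc x⟩ : ↥(bad0 ∪ bad1))) ?_
        intro x y hxy
        have h2 : jf (Sum.inr (i, x)) = jf (Sum.inr (i, y)) := by
          have h3 := Subtype.ext_iff.mp hxy
          exact h3
        exact congrArg Prod.snd (Sum.inr.inj (hjf_inj h2))
      exact lt_asymm hml (hle.trans_lt hbadlt)
    have hax0 : jf (Sum.inr (i, x)) ∉ bad0 := fun h => hx (Or.inl h)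
    have hax1 : jf (Sum.inr (i, x)) ∉ bad1 := fun h => hx (Or.inr h)
    have haT : [jf (Sum.inr (i, x))] ∈ T := hjfT _
    rcases hi with ⟨hiY, hiY'⟩ | ⟨hiY', hiY⟩
    · have haS : jf (Sum.inr (i, x)) ∈ SY Y := hinr Y i x hiY
      have haS' : jf (Sum.inr (i, x)) ∉ SY Y' := fun h => hiY' (hinr' Y' i x h)
      obtain ⟨b, hbT, hba, hQ⟩ := hmain0 _ haS haS' hax0 haT
      rcases hba.lt_or_gt with hlt | hlt
      · exact hrig.2 [] b _ hlt hbT haT (muEquiv_symm hQ)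
      · exact hrig.2 [] _ b hlt haT hbT hQ
    · have haS : jf (Sum.inr (i, x)) ∈ SY Y' := hinr Y' i x hiY'
      have haS' : jf (Sum.inr (i, x)) ∉ SY Y := fun h => hiY (hinr' Y i x h)
      obtain ⟨b, hbT, hba, hQ⟩ := hmain1 _ haS haS' hax1 haT
      rcases hba.lt_or_gt with hlt | hlt
      · exact hrig.2 [] b _ hlt hbT haT (muEquiv_symm hQ)
      · exact hrig.2 [] _ b hlt haT hbT hQ
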